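/- Let A: ℂⁿ → ℂⁿ be a linear endomorphism preserving the hyperplane H = {u = 0}, and suppose there are constants C > 0, β ∈ (0,1) such that for all τ ∈ ℂ and all z with |z| = 1, C⁻¹ exp(Re τ) ≤ [exp(τA)z] ≤ C exp(Re τ), where [(u,v)] = (|u|^{2β} + |v|²)^{1/2}. Then the restriction A₀ of A to H is the identity. In particular, every eigenvalue of A₀ equals 1, and if A₀ = 1 + N with N nilpotent and N ≠ 0, then choosing v with N^k v ≠ 0 and N^{k+1} = 0, the growth of exp(τA₀)v = exp(τ)(v + τNv + … + τ^k N^k v/k!) violates the upper bound for large Re τ = 0, |τ| → ∞. -/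

import Mathlib

open Set

noncomputable def coneNorm (k : ℕ) (β : ℝ) (z : ℂ × EuclideanSpace ℂ (Fin k)) : ℝ :=
  Real.sqrt (‖z.1‖ ^ (2 * β) + ‖z.2‖ ^ 2)

section aux
variable {k : ℕ}

/-- powers of `τ • A` preserve the hyperplane -/
lemma pow_fst_eq_zero (A : (ℂ × EuclideanSpace ℂ (Fin k)) →L[ℂ] (ℂ × EuclideanSpace ℂ (Fin k)))
    (hH : ∀ z : ℂ × EuclideanSpace ℂ (Fin k), z.1 = 0 → (A z).1 = 0) (τ : ℂ) (n : ℕ) :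
    ∀ z : ℂ × EuclideanSpace ℂ (Fin k), z.1 = 0 → (((τ • A) ^ n) z).1 = 0 := by
  induction n with
  | zero => intro z hz; simpa using hz
  | succ n ih =>
    intro z hz
    rw [pow_succ, ContinuousLinearMap.mul_apply]
    apply ih
    simp [hH z hz]

lemma exp_fst_eq_zero (A : (ℂ × EuclideanSpace ℂ (Fin k)) →L[ℂ] (ℂ × EuclideanSpace ℂ (Fin k)))
    (hH : ∀ z : ℂ × EuclideanSpace ℂ (Fin k), z.1 = 0 → (A z).1 = 0) (τ : ℂ)
    (z : ℂ × EuclideanSpace ℂ (Fin k)) (hz : z.1 = 0) :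
    ((NormedSpace.exp (τ • A)) z).1 = 0 := by
  have hs : Summable fun n : ℕ => ((n.factorial : ℂ))⁻¹ • (τ • A) ^ n :=
    NormedSpace.expSeries_summable' (𝕂 := ℂ) (τ • A)
  have h1 : (NormedSpace.exp (τ • A)) z = ∑' n : ℕ, ((n.factorial : ℂ))⁻¹ • ((τ • A) ^ n) z := by
    rw [NormedSpace.exp_eq_tsum (𝕂 := ℂ)]
    have := (ContinuousLinearMap.apply ℂ (ℂ × EuclideanSpace ℂ (Fin k)) z).map_tsum hs
    simpa using this
  have h2 : ((NormedSpace.exp (τ • A)) z).1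
      = ∑' n : ℕ, ((n.factorial : ℂ))⁻¹ • (((τ • A) ^ n) z).1 := by
    rw [h1]
    have hs2 : Summable fun n : ℕ => ((n.factorial : ℂ))⁻¹ • ((τ • A) ^ n) z :=
      ((ContinuousLinearMap.apply ℂ (ℂ × EuclideanSpace ℂ (Fin k)) z).summable hs).congr
        (by intro n; simp)
    have := (ContinuousLinearMap.fst ℂ ℂ (EuclideanSpace ℂ (Fin k))).map_tsum hs2
    simpa using this
  rw [h2]
  have hp := fun n => pow_fst_eq_zero A hH τ n z hz
  simp only [hp, smul_zero, tsum_zero]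

end aux

set_option maxHeartbeats 1000000 in
/-- If a linear endomorphism `A` of `ℂⁿ` preserves `{u = 0}` and the flows
`exp(τA)` satisfy the two-sided cone-distance growth estimate, then `A` restricts to
the identity on the hyperplane `{u = 0}`. -/
theorem stmt15 (k : ℕ) (β C : ℝ) (hβ : β ∈ Set.Ioo (0 : ℝ) 1) (hC : 0 < C)
    (A : (ℂ × EuclideanSpace ℂ (Fin k)) →L[ℂ] (ℂ × EuclideanSpace ℂ (Fin k)))
    (hH : ∀ z : ℂ × EuclideanSpace ℂ (Fin k), z.1 = 0 → (A z).1 = 0)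
    (hest : ∀ τ : ℂ, ∀ z : ℂ × EuclideanSpace ℂ (Fin k), ‖z‖ = 1 →
      C⁻¹ * Real.exp τ.re ≤ coneNorm k β ((NormedSpace.exp (τ • A)) z) ∧
      coneNorm k β ((NormedSpace.exp (τ • A)) z) ≤ C * Real.exp τ.re) :
    ∀ z : ℂ × EuclideanSpace ℂ (Fin k), z.1 = 0 → A z = z := by
  intro z hz
  rcases eq_or_ne z 0 with rfl | hz0
  · simp
  -- normalize
  have hnz : (‖z‖ : ℂ) ≠ 0 := by simpa using norm_ne_zero_iff.2 hz0
  set u := (‖z‖ : ℂ)⁻¹ • z with hu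
  have hu1 : u.1 = 0 := by simp [hu, hz]
  have hun : ‖u‖ = 1 := by
    rw [hu, norm_smul]
    simp [norm_ne_zero_iff.2 hz0]
  -- norm bound on the flow applied to u
  have hbound : ∀ τ : ℂ, ‖(NormedSpace.exp (τ • A)) u‖ ≤ C * Real.exp τ.re := by
    intro τ
    have h := (hest τ u hun).2
    have hf : ((NormedSpace.exp (τ • A)) u).1 = 0 := exp_fst_eq_zero A hH τ u hu1
    have hcn : coneNorm k β ((NormedSpace.exp (τ • A)) u)
        = ‖(NormedSpace.exp (τ • A)) u‖ := by
      unfold coneNorm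
      rw [hf, norm_zero, Real.zero_rpow (by nlinarith [hβ.1] : (2:ℝ) * β ≠ 0), zero_add,
        Real.sqrt_sq (norm_nonneg _), Prod.norm_def, hf, norm_zero,
        max_eq_right (norm_nonneg _)]
    rw [hcn] at h
    exact h
  -- Liouville
  have hdiff : Differentiable ℂ (fun τ : ℂ => Complex.exp (-τ) • (NormedSpace.exp (τ • A)) u) := by
    have h1 : Differentiable ℂ (fun τ : ℂ => NormedSpace.exp (τ • A)) :=
      fun τ => (hasDerivAt_exp_smul_const (𝕂 := ℂ) A τ).differentiableAt
    exact ((Complex.differentiable_exp.comp differentiable_neg)).smul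
      (h1.clm_apply (differentiable_const u))
  have hbdd : Bornology.IsBounded (Set.range
      (fun τ : ℂ => Complex.exp (-τ) • (NormedSpace.exp (τ • A)) u)) := by
    rw [Metric.isBounded_iff_subset_closedBall 0]
    refine ⟨C, ?_⟩
    rintro - ⟨τ, rfl⟩
    rw [Metric.mem_closedBall, dist_zero_right, norm_smul, Complex.norm_exp]
    calc Real.exp (-τ).re * ‖(NormedSpace.exp (τ • A)) u‖
        ≤ Real.exp (-τ).re * (C * Real.exp τ.re) := by
          exact mul_le_mul_of_nonneg_left (hbound τ) (Real.exp_nonneg _)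
      _ = C := by
          rw [Complex.neg_re, show Real.exp (-τ.re) * (C * Real.exp τ.re)
            = C * (Real.exp (-τ.re) * Real.exp τ.re) by ring, ← Real.exp_add]
          simp
  have hconst : ∀ τ : ℂ, Complex.exp (-τ) • (NormedSpace.exp (τ • A)) u = u := by
    intro τ
    have hz0' : (0:ℂ) • A = 0 := zero_smul ℂ A
    have h0 : NormedSpace.exp ((0:ℂ) • A) = 1 := by
      rw [hz0']; exact NormedSpace.exp_zero
    have := hdiff.apply_eq_apply_of_bounded hbdd τ 0
    simpa [h0, ContinuousLinearMap.one_apply] using this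
  have hflow : ∀ τ : ℂ, (NormedSpace.exp (τ • A)) u = Complex.exp τ • u := by
    intro τ
    have h := hconst τ
    have : Complex.exp τ • Complex.exp (-τ) • (NormedSpace.exp (τ • A)) u
        = Complex.exp τ • u := by rw [h]
    rwa [smul_smul, ← Complex.exp_add, add_neg_cancel, Complex.exp_zero, one_smul] at this
  -- differentiate at 0
  have h1 : HasDerivAt (fun τ : ℂ => (NormedSpace.exp (τ • A)) u) (A u) 0 := by
    have := (hasDerivAt_exp_smul_const (𝕂 := ℂ) A 0).clm_apply (hasDerivAt_const 0 u)
    have h0 : NormedSpace.exp ((0:ℂ) • A) = 1 := by rw [zero_smul ℂ A]; exact NormedSpace.exp_zero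
    simpa [h0, ContinuousLinearMap.one_apply] using this
  have h2 : HasDerivAt (fun τ : ℂ => Complex.exp τ • u) u 0 := by
    simpa using (Complex.hasDerivAt_exp 0).smul_const u
  have h1' : HasDerivAt (fun τ : ℂ => Complex.exp τ • u) (A u) 0 := by
    apply h1.congr_of_eventuallyEq
    filter_upwards with τ using (hflow τ).symm
  have hAu : A u = u := h1'.unique h2
  have : A z = z := by
    have := congrArg (fun w => (‖z‖ : ℂ) • w) hAu
    simpa [hu, smul_smul, mul_inv_cancel₀ hnz] using this
  exact this
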